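/- Let L be a factorial and almost prolongable language over a finite alphabet A such that L_n is nonempty for every n. Then for every positive integer d there exists N such that for all n ≥ N, the number of words v ∈ L_n for which there exist words u, w of length d over A with u·v·w ∈ L is strictly greater than (1 − 1/d)·p(n). (This is Equation (2.3) in the proof of Lemma 2.3 of the paper.) -/

import Mathlib

open Filter Topology

variable {A : Type*}

/-- The set of words of `L` of length `n`. -/
def Ln (L : Set (List A)) (n : ℕ) : Set (List A) := {w | w ∈ L ∧ w.length = n}

/-- The complexity function `p n = |L_n|`. -/
noncomputable def cplx (L : Set (List A)) (n : ℕ) : ℕ := Nat.card (Ln L n)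

/-- A language is factorial if it is closed under taking contiguous subwords. -/
def IsFactorial (L : Set (List A)) : Prop := ∀ u v : List A, u ∈ L → v <:+: u → v ∈ L

/-- `w` is left-prolongable in `L`. -/
def LeftProlongable (L : Set (List A)) (w : List A) : Prop := ∃ a : A, (a :: w) ∈ L

/-- `w` is right-prolongable in `L`. -/
def RightProlongable (L : Set (List A)) (w : List A) : Prop := ∃ b : A, (w ++ [b]) ∈ L

/-- `e_l(n)`: the number of words of length `n` in `L` that are not left-prolongable. -/
noncomputable def eL (L : Set (List A)) (n : ℕ) : ℕ :=
  Nat.card {w : List A | w ∈ Ln L n ∧ ¬ LeftProlongable L w}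

/-- `e_r(n)`: the number of words of length `n` in `L` that are not right-prolongable. -/
noncomputable def eR (L : Set (List A)) (n : ℕ) : ℕ :=
  Nat.card {w : List A | w ∈ Ln L n ∧ ¬ RightProlongable L w}

/-- `L` is almost prolongable: `e_l(n)/p(n) → 0` and `e_r(n)/p(n) → 0`. -/
def AlmostProlongable (L : Set (List A)) : Prop :=
  Tendsto (fun n => (eL L n : ℝ) / (cplx L n : ℝ)) atTop (𝓝 0) ∧
  Tendsto (fun n => (eR L n : ℝ) / (cplx L n : ℝ)) atTop (𝓝 0)

section aux
variable [Fintype A] (L : Set (List A))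

lemma Ln_finite (n : ℕ) : (Ln L n).Finite :=
  (List.finite_length_eq A n).subset fun _ h => h.2

lemma cplx_eq (n : ℕ) : cplx L n = (Ln L n).ncard := Nat.card_coe_set_eq _

lemma cplx_pos {n : ℕ} (hne : (Ln L n).Nonempty) : 0 < cplx L n := by
  rw [cplx_eq]
  exact (Set.ncard_pos (Ln_finite L n)).mpr hne

lemma cplx_succ_le (hfac : IsFactorial L) (n : ℕ) :
    cplx L (n+1) ≤ cplx L n * (Fintype.card A + 1) := by
  have h := Set.ncard_le_ncard_of_injOn
    (f := fun x : List A => (x.dropLast, x.getLast?))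
    (s := Ln L (n+1)) (t := (Ln L n) ×ˢ (Set.univ : Set (Option A)))
    (fun x hx => by
      constructor
      · refine ⟨hfac x _ hx.1 (List.dropLast_prefix x).isInfix, ?_⟩
        simp [List.length_dropLast, hx.2]
      · trivial)
    (fun x hx y hy hxy => by
      have hxn : x ≠ [] := by
        intro h; rw [h] at hx; exact absurd hx.2 (by simp)
      have hyn : y ≠ [] := by
        intro h; rw [h] at hy; exact absurd hy.2 (by simp)
      have h1 : x.dropLast = y.dropLast := congrArg Prod.fst hxy
      have h2 : x.getLast? = y.getLast? := congrArg Prod.snd hxy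
      rw [List.getLast?_eq_getLast hxn, List.getLast?_eq_getLast hyn] at h2
      rw [← List.dropLast_append_getLast hxn, ← List.dropLast_append_getLast hyn,
        h1, Option.some_injective _ h2])
    (((Ln_finite L n).prod (Set.finite_univ)))
  rw [cplx_eq, cplx_eq]
  refine h.trans ?_
  have hp : (Ln L n ×ˢ (Set.univ : Set (Option A))).ncard
      = (Ln L n).ncard * (Set.univ : Set (Option A)).ncard := by
    rw [← Nat.card_coe_set_eq, ← Nat.card_coe_set_eq, ← Nat.card_coe_set_eq,
      ← Nat.card_prod]
    exact Nat.card_congr (Equiv.Set.prod _ _)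
  rw [hp, Set.ncard_univ, Nat.card_eq_fintype_card, Fintype.card_option]

lemma cplx_add_le (hfac : IsFactorial L) (n j : ℕ) :
    cplx L (n + j) ≤ cplx L n * (Fintype.card A + 1) ^ j := by
  induction j with
  | zero => simp
  | succ j ih =>
    calc cplx L (n + (j+1)) = cplx L ((n + j) + 1) := by ring_nf
    _ ≤ cplx L (n + j) * (Fintype.card A + 1) := cplx_succ_le L hfac _
    _ ≤ cplx L n * (Fintype.card A + 1) ^ j * (Fintype.card A + 1) := by
        exact Nat.mul_le_mul_right _ ih
    _ = cplx L n * (Fintype.card A + 1) ^ (j+1) := by ring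

end aux

section aux2
variable (L : Set (List A))

lemma exists_max_right {d : ℕ} (hd : 0 < d) {v : List A} (hv : v ∈ L)
    (hbad : ¬ ∃ w : List A, w.length = d ∧ v ++ w ∈ L) :
    ∃ w : List A, w.length < d ∧ (v ++ w) ∈ L ∧ ¬ RightProlongable L (v ++ w) := by
  classical
  set P : ℕ → Prop := fun j => ∃ w : List A, w.length = j ∧ v ++ w ∈ L with hP
  have h0 : P 0 := ⟨[], rfl, by simpa using hv⟩
  set j := Nat.findGreatest P (d - 1) with hj
  have hspec : P j := Nat.findGreatest_spec (Nat.zero_le _) h0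
  obtain ⟨w, hwl, hwL⟩ := hspec
  have hjle : j ≤ d - 1 := Nat.findGreatest_le _
  refine ⟨w, by omega, hwL, ?_⟩
  rintro ⟨b, hb⟩
  rw [List.append_assoc] at hb
  have hP1 : P (j + 1) := ⟨w ++ [b], by simp [hwl], hb⟩
  by_cases hc : j + 1 = d
  · exact hbad ⟨w ++ [b], by simp [hwl, hc], hb⟩
  · have hgt : ¬ P (j + 1) := Nat.findGreatest_is_greatest (P := P) (k := j + 1) (n := d - 1) (by omega) (by omega)
    exact hgt hP1

lemma exists_max_left {d : ℕ} (hd : 0 < d) {x : List A} (hx : x ∈ L)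
    (hbad : ¬ ∃ u : List A, u.length = d ∧ u ++ x ∈ L) :
    ∃ u : List A, u.length < d ∧ (u ++ x) ∈ L ∧ ¬ LeftProlongable L (u ++ x) := by
  classical
  set P : ℕ → Prop := fun j => ∃ u : List A, u.length = j ∧ u ++ x ∈ L with hP
  have h0 : P 0 := ⟨[], rfl, by simpa using hx⟩
  set j := Nat.findGreatest P (d - 1) with hj
  have hspec : P j := Nat.findGreatest_spec (Nat.zero_le _) h0
  obtain ⟨u, hul, huL⟩ := hspec
  have hjle : j ≤ d - 1 := Nat.findGreatest_le _
  refine ⟨u, by omega, huL, ?_⟩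
  rintro ⟨a, ha⟩
  have ha' : (a :: u) ++ x ∈ L := by simpa using ha
  have hP1 : P (j + 1) := ⟨a :: u, by simp [hul], ha'⟩
  by_cases hc : j + 1 = d
  · exact hbad ⟨a :: u, by simp [hul, hc], ha'⟩
  · have hgt : ¬ P (j + 1) := Nat.findGreatest_is_greatest (P := P) (k := j + 1) (n := d - 1) (by omega) (by omega)
    exact hgt hP1

/-- Generic counting: if every element of a finite set `S` is mapped injectively into
one of the sets `T j`, `j < d`, then `|S| ≤ ∑_{j<d} |T j|`. -/
lemma ncard_le_sum_of_inj {α β : Type*} {S : Set α} {T : ℕ → Set β} {f : α → β} {d : ℕ}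
    (hS : S.Finite) (hfin : ∀ j, (T j).Finite)
    (hmap : ∀ a ∈ S, ∃ j, j < d ∧ f a ∈ T j) (hinj : Set.InjOn f S) :
    S.ncard ≤ ∑ j ∈ Finset.range d, (T j).ncard := by
  induction d generalizing S with
  | zero =>
    have : S = ∅ := by
      ext a; simp only [Set.mem_empty_iff_false, iff_false]
      intro ha; obtain ⟨j, hj, _⟩ := hmap a ha; omega
    simp [this]
  | succ d ih =>
    set S1 : Set α := {a ∈ S | f a ∈ T d} with hS1
    set S2 : Set α := {a ∈ S | f a ∉ T d} with hS2
    have hsplit : S = S1 ∪ S2 := by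
      ext a; by_cases h : f a ∈ T d <;> simp [hS1, hS2, h]
    have h1 : S1.ncard ≤ (T d).ncard :=
      Set.ncard_le_ncard_of_injOn f (fun a ha => ha.2)
        (hinj.mono (fun a ha => ha.1)) (hfin d)
    have h2 : S2.ncard ≤ ∑ j ∈ Finset.range d, (T j).ncard := by
      refine ih (hS.subset (fun a ha => ha.1)) ?_ (hinj.mono (fun a ha => ha.1))
      intro a ha
      obtain ⟨j, hj, hfj⟩ := hmap a ha.1
      refine ⟨j, ?_, hfj⟩
      rcases Nat.lt_succ_iff_lt_or_eq.mp hj with h | h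
      · exact h
      · exact absurd (h ▸ hfj) ha.2
    calc S.ncard ≤ S1.ncard + S2.ncard := by
          rw [hsplit]; exact Set.ncard_union_le _ _
    _ ≤ (T d).ncard + ∑ j ∈ Finset.range d, (T j).ncard := Nat.add_le_add h1 h2
    _ = ∑ j ∈ Finset.range (d+1), (T j).ncard := by
        rw [Finset.sum_range_succ]; ring


lemma bad_ncard_le [Fintype A] (L : Set (List A)) (hfac : IsFactorial L)
    {d n : ℕ} (hd : 0 < d) :
    ((Ln L n) \ {v : List A | v ∈ Ln L n ∧
        ∃ u w : List A, u.length = d ∧ w.length = d ∧ (u ++ v ++ w) ∈ L}).ncard ≤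
      (∑ j ∈ Finset.range d, eR L (n + j)) + ∑ j ∈ Finset.range d, eL L (n + d + j) := by
  classical
  set Good : Set (List A) := {v : List A | v ∈ Ln L n ∧
      ∃ u w : List A, u.length = d ∧ w.length = d ∧ (u ++ v ++ w) ∈ L} with hGood
  set Br : Set (List A) :=
    {v | v ∈ Ln L n ∧ ¬ ∃ w : List A, w.length = d ∧ v ++ w ∈ L} with hBr
  set Q : List A → List A → Prop := fun v x =>
    (∃ u w : List A, u.length < d ∧ w.length = d ∧ x = u ++ v ++ w) ∧
      x ∈ L ∧ ¬ LeftProlongable L x with hQ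
  set Bl : Set (List A) := {v | v ∈ Ln L n ∧ ∃ x : List A, Q v x} with hBl
  -- the bad set is contained in Br ∪ Bl
  have hsub : (Ln L n) \ Good ⊆ Br ∪ Bl := by
    rintro v ⟨hvL, hvG⟩
    by_cases hr : ∃ w : List A, w.length = d ∧ v ++ w ∈ L
    · right
      obtain ⟨w, hwd, hvw⟩ := hr
      have hbadl : ¬ ∃ u : List A, u.length = d ∧ u ++ (v ++ w) ∈ L := by
        rintro ⟨u, hud, hu⟩
        exact hvG ⟨hvL, u, w, hud, hwd, by rwa [List.append_assoc]⟩
      obtain ⟨u, hult, huL, hnLP⟩ := exists_max_left L hd hvw hbadl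
      exact ⟨hvL, u ++ (v ++ w),
        ⟨u, w, hult, hwd, (List.append_assoc u v w).symm⟩, huL, hnLP⟩
    · exact Or.inl ⟨hvL, hr⟩
  -- counting Br
  have hBrcard : Br.ncard ≤ ∑ j ∈ Finset.range d, eR L (n + j) := by
    have hcount := ncard_le_sum_of_inj
      (S := Br)
      (T := fun j => {x : List A | x ∈ Ln L (n + j) ∧ ¬ RightProlongable L x})
      (f := fun v => v ++ (if h : ∃ w : List A, w.length < d ∧ (v ++ w) ∈ L ∧
        ¬ RightProlongable L (v ++ w) then h.choose else []))
      (d := d)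
      ((Ln_finite L n).subset (fun v hv => hv.1))
      (fun j => (Ln_finite L (n + j)).subset (fun x hx => hx.1))
      (fun v hv => by
        have hex : ∃ w : List A, w.length < d ∧ (v ++ w) ∈ L ∧
            ¬ RightProlongable L (v ++ w) := exists_max_right L hd hv.1.1 hv.2
        obtain ⟨hwlt, hwL, hwRP⟩ := hex.choose_spec
        refine ⟨hex.choose.length, hwlt, ?_⟩
        beta_reduce
        rw [dif_pos hex]
        exact ⟨⟨hwL, by simp [hv.1.2]⟩, hwRP⟩)
      (fun v₁ hv₁ v₂ hv₂ heq => by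
        have h1 : v₁ = ((fun v => v ++ (if h : ∃ w : List A, w.length < d ∧
            (v ++ w) ∈ L ∧ ¬ RightProlongable L (v ++ w) then h.choose else [])) v₁).take n :=
          (List.take_left' hv₁.1.2).symm
        have h2 : v₂ = ((fun v => v ++ (if h : ∃ w : List A, w.length < d ∧
            (v ++ w) ∈ L ∧ ¬ RightProlongable L (v ++ w) then h.choose else [])) v₂).take n :=
          (List.take_left' hv₂.1.2).symm
        rw [h1, h2, heq])
    refine hcount.trans (le_of_eq (Finset.sum_congr rfl (fun j _ => ?_)))
    rw [eR, Nat.card_coe_set_eq]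
  -- counting Bl
  have hBlcard : Bl.ncard ≤ ∑ j ∈ Finset.range d, eL L (n + d + j) := by
    have hrecover : ∀ v ∈ Bl,
        ∀ x, Q v x → x.length = n + d + (x.length - (n + d)) ∧
          ((x.drop (x.length - (n + d))).take n = v) := by
      rintro v hv x ⟨⟨u, w, hult, hwd, hx⟩, hxL, hnLP⟩
      have hvn : v.length = n := hv.1.2
      have hxlen : x.length = u.length + (n + d) := by
        rw [hx]; simp only [List.length_append, hvn, hwd]; omega
      have hdrop : x.drop (x.length - (n + d)) = v ++ w := by
        have : x.length - (n + d) = u.length := by omega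
        rw [this, hx, List.append_assoc]
        exact List.drop_left' rfl
      refine ⟨by omega, ?_⟩
      rw [hdrop]
      exact List.take_left' hvn
    have hcount := ncard_le_sum_of_inj
      (S := Bl)
      (T := fun j => {x : List A | x ∈ Ln L (n + d + j) ∧ ¬ LeftProlongable L x})
      (f := fun v => if h : ∃ x : List A, Q v x then h.choose else v)
      (d := d)
      ((Ln_finite L n).subset (fun v hv => hv.1))
      (fun j => (Ln_finite L (n + d + j)).subset (fun x hx => hx.1))
      (fun v hv => by
        have hex : ∃ x : List A, Q v x := hv.2
        obtain ⟨⟨u, w, hult, hwd, hx⟩, hxL, hnLP⟩ := hex.choose_spec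
        have hvn : v.length = n := hv.1.2
        have hxlen : hex.choose.length = n + d + u.length := by
          rw [hx]; simp only [List.length_append, hvn, hwd]; omega
        refine ⟨u.length, hult, ?_⟩
        beta_reduce
        rw [dif_pos hex]
        exact ⟨⟨hxL, hxlen⟩, hnLP⟩)
      (fun v₁ hv₁ v₂ hv₂ heq => by
        simp only [dif_pos hv₁.2, dif_pos hv₂.2] at heq
        obtain ⟨_, h1⟩ := hrecover v₁ hv₁ _ hv₁.2.choose_spec
        obtain ⟨_, h2⟩ := hrecover v₂ hv₂ _ hv₂.2.choose_spec
        rw [← h1, ← h2, heq])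
    refine hcount.trans (le_of_eq (Finset.sum_congr rfl (fun j _ => ?_)))
    rw [eL, Nat.card_coe_set_eq]
  calc ((Ln L n) \ Good).ncard ≤ (Br ∪ Bl).ncard :=
        Set.ncard_le_ncard hsub
          (((Ln_finite L n).subset (fun v hv => hv.1)).union
            ((Ln_finite L n).subset (fun v hv => hv.1)))
  _ ≤ Br.ncard + Bl.ncard := Set.ncard_union_le _ _
  _ ≤ _ := Nat.add_le_add hBrcard hBlcard

end aux2

theorem almost_prolongable_many_biprolongable_words {A : Type*} [Fintype A]
    (L : Set (List A)) (hfac : IsFactorial L) (hap : AlmostProlongable L)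
    (hne : ∀ n : ℕ, (Ln L n).Nonempty) :
    ∀ d : ℕ, 0 < d → ∃ N : ℕ, ∀ n ≥ N,
      (1 - 1 / (d : ℝ)) * (cplx L n : ℝ) <
        (Nat.card {v : List A | v ∈ Ln L n ∧
          ∃ u w : List A, u.length = d ∧ w.length = d ∧ (u ++ v ++ w) ∈ L} : ℝ) := by
  intro d hd
  classical
  obtain ⟨hLtend, hRtend⟩ := hap
  have hd' : (0:ℝ) < d := by exact_mod_cast hd
  set k1 : ℝ := ((Fintype.card A : ℝ) + 1) with hk1def
  have hk1 : (1:ℝ) ≤ k1 := by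
    rw [hk1def]
    have : (0:ℝ) ≤ (Fintype.card A : ℝ) := Nat.cast_nonneg _
    linarith
  set K : ℝ := k1 ^ (2*d) with hKdef
  have hK : (0:ℝ) < K := by positivity
  have hKge : (1:ℝ) ≤ K := one_le_pow₀ hk1
  set ε : ℝ := 1 / (2 * (d:ℝ)^2 * K) with hεdef
  have hε : (0:ℝ) < ε := by positivity
  obtain ⟨Ml, hMl⟩ := eventually_atTop.mp (hLtend.eventually (gt_mem_nhds hε))
  obtain ⟨Mr, hMr⟩ := eventually_atTop.mp (hRtend.eventually (gt_mem_nhds hε))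
  refine ⟨max Ml Mr, fun n hn => ?_⟩
  set G : Set (List A) := {v : List A | v ∈ Ln L n ∧
      ∃ u w : List A, u.length = d ∧ w.length = d ∧ (u ++ v ++ w) ∈ L} with hG
  have hGsub : G ⊆ Ln L n := fun v hv => hv.1
  have hp : ∀ m : ℕ, (0:ℝ) < (cplx L m : ℝ) := fun m => by
    exact_mod_cast cplx_pos L (hne m)
  set p : ℝ := (cplx L n : ℝ) with hpdef
  -- bounds on individual error terms
  have hgrow : ∀ j : ℕ, j ≤ 2*d → (cplx L (n + j) : ℝ) ≤ p * K := by
    intro j hj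
    have h1 : (cplx L (n + j) : ℝ) ≤ (cplx L n : ℝ) * k1 ^ j := by
      rw [hk1def]
      exact_mod_cast cplx_add_le L hfac n j
    refine h1.trans ?_
    have h2 : k1 ^ j ≤ K := pow_le_pow_right₀ hk1 hj
    have := (hp n).le
    nlinarith
  have hRterm : ∀ j : ℕ, j < d → (eR L (n + j) : ℝ) < ε * (p * K) := by
    intro j hj
    have hm : n + j ≥ Mr := le_trans (le_trans (le_max_right Ml Mr) hn) (Nat.le_add_right n j)
    have h1 := hMr (n + j) hm
    have h2 : (eR L (n + j) : ℝ) < ε * (cplx L (n + j) : ℝ) :=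
      (div_lt_iff₀ (hp (n + j))).mp h1
    refine h2.trans_le ?_
    have := hgrow j (by omega)
    nlinarith
  have hLterm : ∀ j : ℕ, j < d → (eL L (n + d + j) : ℝ) < ε * (p * K) := by
    intro j hj
    have hm : n + d + j ≥ Ml := by
      have : n ≥ Ml := le_trans (le_max_left Ml Mr) hn
      omega
    have h1 := hMl (n + d + j) hm
    have h2 : (eL L (n + d + j) : ℝ) < ε * (cplx L (n + d + j) : ℝ) :=
      (div_lt_iff₀ (hp (n + d + j))).mp h1
    refine h2.trans_le ?_
    have : (cplx L (n + (d + j)) : ℝ) ≤ p * K := hgrow (d + j) (by omega)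
    rw [← Nat.add_assoc] at this
    nlinarith
  -- bound the bad set
  have hbad_nat := bad_ncard_le L hfac (n := n) hd
  have hbadR : (↑(∑ j ∈ Finset.range d, eR L (n + j)) : ℝ) < d * (ε * (p * K)) := by
    push_cast
    calc (∑ j ∈ Finset.range d, (eR L (n + j) : ℝ))
        < ∑ _j ∈ Finset.range d, ε * (p * K) := by
          refine Finset.sum_lt_sum_of_nonempty ⟨0, Finset.mem_range.mpr hd⟩ ?_
          intro j hj
          exact hRterm j (Finset.mem_range.mp hj)
    _ = d * (ε * (p * K)) := by rw [Finset.sum_const, Finset.card_range]; ring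
  have hbadL : (↑(∑ j ∈ Finset.range d, eL L (n + d + j)) : ℝ) < d * (ε * (p * K)) := by
    push_cast
    calc (∑ j ∈ Finset.range d, (eL L (n + d + j) : ℝ))
        < ∑ _j ∈ Finset.range d, ε * (p * K) := by
          refine Finset.sum_lt_sum_of_nonempty ⟨0, Finset.mem_range.mpr hd⟩ ?_
          intro j hj
          exact hLterm j (Finset.mem_range.mp hj)
    _ = d * (ε * (p * K)) := by rw [Finset.sum_const, Finset.card_range]; ring
  have hbad : (((Ln L n) \ G).ncard : ℝ) < p / d := by
    have h1 : (((Ln L n) \ G).ncard : ℝ) ≤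
        (↑(∑ j ∈ Finset.range d, eR L (n + j)) : ℝ) +
          (↑(∑ j ∈ Finset.range d, eL L (n + d + j)) : ℝ) := by
      exact_mod_cast hbad_nat
    have h2 : (((Ln L n) \ G).ncard : ℝ) < 2 * d * (ε * (p * K)) := by
      calc (((Ln L n) \ G).ncard : ℝ) ≤ _ := h1
      _ < d * (ε * (p * K)) + d * (ε * (p * K)) := add_lt_add hbadR hbadL
      _ = 2 * d * (ε * (p * K)) := by ring
    refine h2.trans_le (le_of_eq ?_)
    rw [hεdef]
    field_simp
  -- conclude
  have hsplit : ((Ln L n) \ G).ncard + G.ncard = cplx L n := by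
    rw [cplx_eq]
    exact Set.ncard_diff_add_ncard_of_subset hGsub (Ln_finite L n)
  have hGcard : (Nat.card G : ℝ) = p - (((Ln L n) \ G).ncard : ℝ) := by
    rw [Nat.card_coe_set_eq]
    have : (((Ln L n) \ G).ncard : ℝ) + (G.ncard : ℝ) = p := by
      rw [hpdef, ← hsplit]
      push_cast
      ring
    linarith
  rw [hGcard]
  have : (1 - 1 / (d:ℝ)) * p = p - p / d := by field_simp
  rw [this]
  linarith
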